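/- Existence direction of the characterization of determinantal data (identity permutation): with l_k ≥ 1, Σ l_k = n, d_k ≥ 1, s_0 ≤ ··· ≤ s_n positive integers, write Id[k] = l_1+···+l_k, L_k = s_0+···+s_{Id[k−1]+1} and R_k = s_{n−Id[k]+2}+···+s_n. If d_k R_k − l_k < d_k L_k for all k, then any m ∈ ℤ^r with d_k R_k − l_k ≤ m_k ≤ d_k L_k − 1 for all k is determinantal, i.e. N(m) = {0,1}. -/

import Mathlib

open Finset

/-- `P_k(m) = {z ∈ ℤ : m < z·d ≤ m + l}`, the integers in `(m/d, (m+l)/d]`. -/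
def Pset (m : ℤ) (d l : ℕ) : Set ℤ := {z : ℤ | m < z * d ∧ z * d ≤ m + l}

/-- The set of sums of `p` distinct entries of `s`. -/
def Sset {n : ℕ} (s : Fin (n + 1) → ℕ) (p : ℕ) : Set ℤ :=
  {t : ℤ | ∃ A : Finset (Fin (n + 1)), A.card = p ∧ t = ∑ i ∈ A, (s i : ℤ)}

/-- `q(z) = Σ_{P_k(m) < z} l_k`, where `P_k < z` means `z·d_k > m_k + l_k`. -/
def qval {r : ℕ} (l d : Fin r → ℕ) (m : Fin r → ℤ) (z : ℤ) : ℕ :=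
  ∑ k ∈ Finset.univ.filter (fun k => m k + (l k : ℤ) < z * (d k : ℤ)), l k

/-- `N(m) = { p − q(z) : p ∈ [0, n+1], z ∈ Q_p }` with `Q_p = S_p \ ⋃_k P_k(m)`. -/
def Nset {r n : ℕ} (l d : Fin r → ℕ) (s : Fin (n + 1) → ℕ) (m : Fin r → ℤ) : Set ℤ :=
  {ν : ℤ | ∃ p : ℕ, p ≤ n + 1 ∧ ∃ z : ℤ,
    (z ∈ Sset s p ∧ ∀ k, z ∉ Pset (m k) (d k) (l k)) ∧
    ν = (p : ℤ) - (qval l d m z : ℤ)}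

/-- `Id[k] = l_1 + ⋯ + l_k` (inclusive partial sum in the `Fin r` order). -/
def IdS {r : ℕ} (l : Fin r → ℕ) (k : Fin r) : ℕ :=
  ∑ i ∈ Finset.univ.filter (fun i : Fin r => i ≤ k), l i

/-- `Id[k-1] = l_1 + ⋯ + l_{k-1}` (strict partial sum). -/
def IdSlt {r : ℕ} (l : Fin r → ℕ) (k : Fin r) : ℕ :=
  ∑ i ∈ Finset.univ.filter (fun i : Fin r => i < k), l i

/-- `L_k = s_0 + ⋯ + s_{Id[k-1]+1}` = min S_{Id[k-1]+2}. -/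
def Lval {r n : ℕ} (l : Fin r → ℕ) (s : Fin (n + 1) → ℕ) (k : Fin r) : ℤ :=
  ∑ j ∈ Finset.univ.filter (fun j : Fin (n + 1) => (j : ℕ) ≤ IdSlt l k + 1), (s j : ℤ)

/-- `R_k = s_{n-Id[k]+2} + ⋯ + s_n` = max S_{Id[k]-1}. -/
def Rval {r n : ℕ} (l : Fin r → ℕ) (s : Fin (n + 1) → ℕ) (k : Fin r) : ℤ :=
  ∑ j ∈ Finset.univ.filter (fun j : Fin (n + 1) => n + 2 ≤ (j : ℕ) + IdS l k), (s j : ℤ)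

/-! ### Auxiliary lemmas -/

lemma aux_val_le_orderEmb {t N : ℕ} (f : Fin t ↪o Fin N) (i : Fin t) : (i : ℕ) ≤ (f i : ℕ) := by
  have key : ∀ v : ℕ, ∀ i : Fin t, i.val = v → v ≤ (f i : ℕ) := by
    intro v
    induction v with
    | zero => intro i _; exact Nat.zero_le _
    | succ v ih =>
      intro i hi
      have hv : v < t := by omega
      have h1 : (⟨v, hv⟩ : Fin t) < i := by simp [Fin.lt_def, hi]
      have h2 : f ⟨v, hv⟩ < f i := f.strictMono h1
      have := ih ⟨v, hv⟩ rfl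
      have := Fin.lt_def.mp h2
      omega
  exact key i.val i rfl

lemma aux_filter_lt_eq_image {n t : ℕ} (ht : t ≤ n + 1) :
    Finset.univ.filter (fun j : Fin (n + 1) => (j : ℕ) < t) =
      Finset.image (Fin.castLE ht) Finset.univ := by
  ext j
  simp only [mem_filter, mem_univ, true_and, mem_image]
  constructor
  · intro hj
    exact ⟨⟨j.val, hj⟩, by simp [Fin.ext_iff]⟩
  · rintro ⟨i, _, rfl⟩
    exact i.isLt

lemma aux_card_filter_lt {n t : ℕ} (ht : t ≤ n + 1) :
    (Finset.univ.filter (fun j : Fin (n + 1) => (j : ℕ) < t)).card = t := by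
  rw [aux_filter_lt_eq_image ht,
    Finset.card_image_of_injective _ (Fin.castLE_injective ht)]
  simp

lemma aux_card_filter_high {n t : ℕ} (ht : t ≤ n + 1) :
    (Finset.univ.filter (fun j : Fin (n + 1) => n + 1 ≤ (j : ℕ) + t)).card = t := by
  have hsplit := Finset.card_filter_add_card_filter_not
    (s := (Finset.univ : Finset (Fin (n + 1))))
    (p := fun j : Fin (n + 1) => n + 1 ≤ (j : ℕ) + t)
  have heq : Finset.univ.filter (fun j : Fin (n + 1) => ¬ (n + 1 ≤ (j : ℕ) + t)) =
      Finset.univ.filter (fun j : Fin (n + 1) => (j : ℕ) < n + 1 - t) := by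
    apply Finset.filter_congr
    intro j _
    constructor
    · intro h; (try simp only at h ⊢); omega
    · intro h; (try simp only at h ⊢); omega
  rw [heq, aux_card_filter_lt (by omega)] at hsplit
  simp only [Finset.card_univ, Fintype.card_fin] at hsplit
  omega

/-- Sum over any `t`-element subset is at least the sum of the `t` smallest values. -/
lemma aux_sum_low_le {n t : ℕ} (f : Fin (n + 1) → ℤ) (hf : Monotone f)
    (A : Finset (Fin (n + 1))) (hA : A.card = t) :
    ∑ j ∈ Finset.univ.filter (fun j : Fin (n + 1) => (j : ℕ) < t), f j ≤ ∑ i ∈ A, f i := by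
  have ht : t ≤ n + 1 := by
    rw [← hA]
    simpa using Finset.card_le_card (Finset.subset_univ A)
  set e := A.orderEmbOfFin hA with he
  have h1 : ∑ i ∈ A, f i = ∑ i : Fin t, f (e i) := by
    have himg : Finset.image e Finset.univ = A := by
      apply Finset.coe_inj.mp
      rw [Finset.coe_image, Finset.coe_univ, Set.image_univ]
      exact A.range_orderEmbOfFin hA
    rw [← himg, Finset.sum_image (by intro x _ y _ h; exact e.injective h)]
  have h2 : ∑ j ∈ Finset.univ.filter (fun j : Fin (n + 1) => (j : ℕ) < t), f j =
      ∑ i : Fin t, f (Fin.castLE ht i) := by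
    rw [aux_filter_lt_eq_image ht, Finset.sum_image
      (by intro x _ y _ h; exact Fin.castLE_injective ht h)]
  rw [h1, h2]
  apply Finset.sum_le_sum
  intro i _
  apply hf
  rw [Fin.le_def]
  simpa using aux_val_le_orderEmb e i

/-- Sum over any `t`-element subset is at most the sum of the `t` largest values. -/
lemma aux_sum_high_ge {n t : ℕ} (f : Fin (n + 1) → ℤ) (hf : Monotone f)
    (A : Finset (Fin (n + 1))) (hA : A.card = t) :
    ∑ i ∈ A, f i ≤ ∑ j ∈ Finset.univ.filter (fun j : Fin (n + 1) => n + 1 ≤ (j : ℕ) + t), f j := by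
  have hrevmono : Monotone (fun j : Fin (n + 1) => - f j.rev) := by
    intro a b hab
    simp only [neg_le_neg_iff]
    exact hf (by rw [Fin.le_def]; simp [Fin.rev]; omega)
  have hcard : (A.image Fin.rev).card = t := by
    rw [Finset.card_image_of_injective _ Fin.rev_injective, hA]
  have := aux_sum_low_le _ hrevmono (A.image Fin.rev) hcard
  have h1 : ∑ i ∈ A.image Fin.rev, (fun j : Fin (n + 1) => - f j.rev) i = - ∑ i ∈ A, f i := by
    rw [Finset.sum_image (by intro x _ y _ h; exact Fin.rev_injective h)]
    simp
  have h2 : ∑ j ∈ Finset.univ.filter (fun j : Fin (n + 1) => (j : ℕ) < t),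
      (fun j : Fin (n + 1) => - f j.rev) j
      = - ∑ j ∈ Finset.univ.filter (fun j : Fin (n + 1) => n + 1 ≤ (j : ℕ) + t), f j := by
    rw [← Finset.sum_neg_distrib]
    apply Finset.sum_nbij' (i := fun j => Fin.rev j) (j := fun j => Fin.rev j)
    · intro a ha
      simp only [mem_filter, mem_univ, true_and] at ha ⊢
      simp [Fin.rev]; omega
    · intro a ha
      simp only [mem_filter, mem_univ, true_and] at ha ⊢
      simp [Fin.rev]; omega
    · intro a _; simp
    · intro a _; simp
    · intro a _; simp
  rw [h1, h2] at this
  omega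

/-- `IdS = IdSlt + l`. -/
lemma aux_IdS_eq {r : ℕ} (l : Fin r → ℕ) (k : Fin r) : IdS l k = IdSlt l k + l k := by
  unfold IdS IdSlt
  have : Finset.univ.filter (fun i : Fin r => i ≤ k) =
      insert k (Finset.univ.filter (fun i : Fin r => i < k)) := by
    ext i
    simp only [mem_filter, mem_univ, true_and, mem_insert]
    constructor
    · intro h; rcases eq_or_lt_of_le h with h | h
      · exact Or.inl h
      · exact Or.inr h
    · rintro (rfl | h); · exact le_refl _
      · exact le_of_lt h
  rw [this, Finset.sum_insert (by simp)]
  omega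

lemma aux_IdSlt_mono {r : ℕ} (l : Fin r → ℕ) {k k' : Fin r} (h : k ≤ k') :
    IdSlt l k ≤ IdSlt l k' := by
  apply Finset.sum_le_sum_of_subset
  intro i hi
  simp only [mem_filter, mem_univ, true_and] at hi ⊢
  exact lt_of_lt_of_le hi h

lemma aux_IdS_mono {r : ℕ} (l : Fin r → ℕ) {k k' : Fin r} (h : k ≤ k') :
    IdS l k ≤ IdS l k' := by
  apply Finset.sum_le_sum_of_subset
  intro i hi
  simp only [mem_filter, mem_univ, true_and] at hi ⊢
  exact le_trans hi h

/-- Sum of `l` over intervals entirely finished by slot `p` is at most `p`. -/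
lemma aux_sum_IdS_le {r : ℕ} (l : Fin r → ℕ) (p : ℕ) :
    ∑ k ∈ Finset.univ.filter (fun k => IdS l k ≤ p), l k ≤ p := by
  set E := Finset.univ.filter (fun k : Fin r => IdS l k ≤ p) with hE
  rcases E.eq_empty_or_nonempty with h | h
  · rw [h]; simp
  · set j := E.max' h with hj
    have hjE : j ∈ E := E.max'_mem h
    have hjp : IdS l j ≤ p := by
      rw [hE] at hjE; simpa using hjE
    calc ∑ k ∈ E, l k ≤ ∑ k ∈ Finset.univ.filter (fun k : Fin r => k ≤ j), l k := by
          apply Finset.sum_le_sum_of_subset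
          intro k hk
          simp only [mem_filter, mem_univ, true_and]
          exact E.le_max' k hk
      _ = IdS l j := rfl
      _ ≤ p := hjp

/-- Sum of `l` over intervals whose slots start before `p` is at least `p - 1`. -/
lemma aux_sum_IdSlt_ge {r n : ℕ} (hr : 1 ≤ r) (l : Fin r → ℕ) (hl : ∀ k, 1 ≤ l k)
    (hsum : ∑ k, l k = n) (p : ℕ) (hp : p ≤ n + 1) :
    p ≤ (∑ k ∈ Finset.univ.filter (fun k => IdSlt l k + 2 ≤ p), l k) + 1 := by
  rcases Nat.lt_or_ge p 2 with h2 | h2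
  · omega
  set D := Finset.univ.filter (fun k : Fin r => IdSlt l k + 2 ≤ p) with hD
  have hne : D.Nonempty := by
    refine ⟨⟨0, hr⟩, ?_⟩
    rw [hD, mem_filter]
    refine ⟨mem_univ _, ?_⟩
    have : IdSlt l ⟨0, hr⟩ = 0 := by
      unfold IdSlt
      rw [Finset.filter_false_of_mem, Finset.sum_empty]
      intro i _
      simp [Fin.lt_def]
    omega
  set j := D.max' hne with hj
  have hjD : j ∈ D := D.max'_mem hne
  have hjp : IdSlt l j + 2 ≤ p := by rw [hD] at hjD; simpa using hjD
  have hkey : ∑ k ∈ Finset.univ.filter (fun k : Fin r => k ≤ j), l k ≤ ∑ k ∈ D, l k := by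
    apply Finset.sum_le_sum_of_subset
    intro k hk
    simp only [mem_filter, mem_univ, true_and] at hk
    rw [hD, mem_filter]
    exact ⟨mem_univ _, by have := aux_IdSlt_mono l hk; omega⟩
  have hIdj : IdS l j = ∑ k ∈ Finset.univ.filter (fun k : Fin r => k ≤ j), l k := rfl
  -- two cases: j is the last index or not
  rcases Nat.lt_or_ge (j.val + 1) r with hlast | hlast
  · -- successor exists
    set j1 : Fin r := ⟨j.val + 1, hlast⟩ with hj1
    have hj1D : j1 ∉ D := by
      intro hmem
      have := D.le_max' j1 hmem
      rw [← hj] at this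
      have := Fin.le_def.mp this
      simp [hj1] at this
    have hIdlt : IdSlt l j1 = IdS l j := by
      unfold IdSlt IdS
      congr 1
      ext i
      simp only [mem_filter, mem_univ, true_and, Fin.lt_def, Fin.le_def, hj1]
      omega
    have : ¬ (IdSlt l j1 + 2 ≤ p) := by
      intro hcon
      exact hj1D (by rw [hD, mem_filter]; exact ⟨mem_univ _, hcon⟩)
    omega
  · -- j is last: IdS l j = n
    have huniv : Finset.univ.filter (fun k : Fin r => k ≤ j) = Finset.univ := by
      ext i
      simp only [mem_filter, mem_univ, true_and, iff_true, Fin.le_def]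
      have := i.isLt
      omega
    have : IdS l j = n := by rw [hIdj, huniv, hsum]
    omega

/-- Capacity: any strictly increasing family has at most `l k` members in `P_k`. -/
lemma aux_cap {r : ℕ} (l d : Fin r → ℕ) (m : Fin r → ℤ) (hd : ∀ k, 1 ≤ d k) (k : Fin r)
    (T : Finset ℕ) (g : ℕ → ℤ) (hg : ∀ p ∈ T, ∀ q ∈ T, p < q → g p < g q) :
    (T.filter (fun p => m k < g p * d k ∧ g p * d k ≤ m k + l k)).card ≤ l k := by
  have hIoc : (Finset.Ioc (m k) (m k + l k)).card = l k := by
    rw [Int.card_Ioc]; simp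
  have hle : (T.filter (fun p => m k < g p * d k ∧ g p * d k ≤ m k + l k)).card
      ≤ (Finset.Ioc (m k) (m k + l k)).card := by
    apply Finset.card_le_card_of_injOn (fun p => g p * d k)
    · intro p hp
      simp only [coe_filter, mem_filter, Set.mem_setOf_eq] at hp
      simp only [Finset.coe_Ioc, Set.mem_Ioc]
      exact hp.2
    · intro p hp q hq hpq
      simp only [Finset.coe_filter, Set.mem_setOf_eq] at hp hq
      have hdk : ((d k : ℤ)) ≠ 0 := by
        have h1 := hd k
        simp only [ne_eq, Nat.cast_eq_zero]
        omega
      have hgpq : g p = g q := mul_right_cancel₀ hdk hpq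
      by_contra hne
      rcases Nat.lt_or_ge p q with h | h
      · exact absurd hgpq (ne_of_lt (hg p hp.1 q hq.1 h))
      · have : q < p := by omega
        exact absurd hgpq.symm (ne_of_lt (hg q hq.1 p hp.1 this))
  omega

/-- The minimal `p`-sum. -/
def zmin {n : ℕ} (s : Fin (n + 1) → ℕ) (p : ℕ) : ℤ :=
  ∑ j ∈ Finset.univ.filter (fun j : Fin (n + 1) => (j : ℕ) < p), (s j : ℤ)

/-- The maximal `p`-sum. -/
def zmax {n : ℕ} (s : Fin (n + 1) → ℕ) (p : ℕ) : ℤ :=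
  ∑ j ∈ Finset.univ.filter (fun j : Fin (n + 1) => n + 1 ≤ (j : ℕ) + p), (s j : ℤ)

lemma zmin_mem {n : ℕ} (s : Fin (n + 1) → ℕ) (p : ℕ) (hp : p ≤ n + 1) :
    zmin s p ∈ Sset s p :=
  ⟨_, aux_card_filter_lt hp, rfl⟩

lemma zmax_mem {n : ℕ} (s : Fin (n + 1) → ℕ) (p : ℕ) (hp : p ≤ n + 1) :
    zmax s p ∈ Sset s p :=
  ⟨_, aux_card_filter_high hp, rfl⟩

lemma zmin_strict {n : ℕ} (s : Fin (n + 1) → ℕ) (hs : ∀ i, 0 < s i) {p p' : ℕ}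
    (h : p < p') (hp' : p' ≤ n + 1) : zmin s p < zmin s p' := by
  refine Finset.sum_lt_sum_of_subset ?_ (i := (⟨p, by omega⟩ : Fin (n + 1))) ?_ ?_ ?_ ?_
  · intro j hj
    simp only [mem_filter, mem_univ, true_and] at hj ⊢
    omega
  · simp only [mem_filter, mem_univ, true_and]
    omega
  · simp only [mem_filter, mem_univ, true_and, not_lt]
    omega
  · exact_mod_cast hs _
  · intro j _ _; positivity

lemma zmax_strict {n : ℕ} (s : Fin (n + 1) → ℕ) (hs : ∀ i, 0 < s i) {p p' : ℕ}
    (h : p < p') (hp' : p' ≤ n + 1) : zmax s p < zmax s p' := by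
  refine Finset.sum_lt_sum_of_subset ?_ (i := (⟨n + 1 - p', by omega⟩ : Fin (n + 1))) ?_ ?_ ?_ ?_
  · intro j hj
    simp only [mem_filter, mem_univ, true_and] at hj ⊢
    omega
  · simp only [mem_filter, mem_univ, true_and]
    omega
  · simp only [mem_filter, mem_univ, true_and, not_le]
    omega
  · exact_mod_cast hs _
  · intro j _ _; positivity

section Main

variable {r n : ℕ} (hr : 1 ≤ r) (l d : Fin r → ℕ)
  (hl : ∀ k, 1 ≤ l k) (hd : ∀ k, 1 ≤ d k) (hsum : ∑ k, l k = n)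
  (s : Fin (n + 1) → ℕ) (hs : ∀ i, 0 < s i) (hmono : Monotone s)
  (m : Fin r → ℤ)
  (hm : ∀ k : Fin r,
    (d k : ℤ) * Rval l s k - (l k : ℤ) ≤ m k ∧ m k ≤ (d k : ℤ) * Lval l s k - 1)

include hd hmono hm in
/-- Upper bound: `q(z) ≤ p` for any `z ∈ S_p`. -/
lemma q_le_p (p : ℕ) (z : ℤ) (hz : z ∈ Sset s p) : qval l d m z ≤ p := by
  obtain ⟨A, hA, rfl⟩ := hz
  unfold qval
  have hsub : Finset.univ.filter
      (fun k => m k + (l k : ℤ) < (∑ i ∈ A, (s i : ℤ)) * (d k : ℤ)) ⊆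
      Finset.univ.filter (fun k : Fin r => IdS l k ≤ p) := by
    intro k hk
    simp only [mem_filter, mem_univ, true_and] at hk ⊢
    by_contra hcon
    push_neg at hcon
    -- z ≤ Rval
    have h1 : ∑ i ∈ A, (s i : ℤ) ≤
        ∑ j ∈ Finset.univ.filter (fun j : Fin (n + 1) => n + 1 ≤ (j : ℕ) + p), (s j : ℤ) :=
      aux_sum_high_ge _ (fun a b hab => by exact_mod_cast hmono hab) A hA
    have h2 : (∑ j ∈ Finset.univ.filter (fun j : Fin (n + 1) => n + 1 ≤ (j : ℕ) + p),
        (s j : ℤ)) ≤ Rval l s k := by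
      unfold Rval
      apply Finset.sum_le_sum_of_subset_of_nonneg
      · intro j hj
        simp only [mem_filter, mem_univ, true_and] at hj ⊢
        omega
      · intro j _ _; positivity
    have hzR : ∑ i ∈ A, (s i : ℤ) ≤ Rval l s k := le_trans h1 h2
    have hdk : (0 : ℤ) ≤ (d k : ℤ) := by positivity
    have h3 : (∑ i ∈ A, (s i : ℤ)) * (d k : ℤ) ≤ Rval l s k * (d k : ℤ) :=
      mul_le_mul_of_nonneg_right hzR hdk
    have h4 : Rval l s k * (d k : ℤ) = (d k : ℤ) * Rval l s k := mul_comm _ _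
    have hmk := (hm k).1
    omega
  calc ∑ k ∈ Finset.univ.filter
        (fun k => m k + (l k : ℤ) < (∑ i ∈ A, (s i : ℤ)) * (d k : ℤ)), l k
      ≤ ∑ k ∈ Finset.univ.filter (fun k : Fin r => IdS l k ≤ p), l k :=
        Finset.sum_le_sum_of_subset hsub
    _ ≤ p := aux_sum_IdS_le l p

include hr hl hd hsum hmono hm in
/-- Lower bound: `p ≤ q(z) + 1` for `z ∈ S_p` avoiding all `P_k`. -/
lemma p_le_q (p : ℕ) (z : ℤ) (hp : p ≤ n + 1) (hz : z ∈ Sset s p)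
    (hfree : ∀ k, z ∉ Pset (m k) (d k) (l k)) : p ≤ qval l d m z + 1 := by
  obtain ⟨A, hA, rfl⟩ := hz
  unfold qval
  have hsub : Finset.univ.filter (fun k : Fin r => IdSlt l k + 2 ≤ p) ⊆
      Finset.univ.filter
      (fun k => m k + (l k : ℤ) < (∑ i ∈ A, (s i : ℤ)) * (d k : ℤ)) := by
    intro k hk
    simp only [mem_filter, mem_univ, true_and] at hk ⊢
    -- z ≥ Lval
    have h1 : (∑ j ∈ Finset.univ.filter (fun j : Fin (n + 1) => (j : ℕ) < p), (s j : ℤ)) ≤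
        ∑ i ∈ A, (s i : ℤ) :=
      aux_sum_low_le _ (fun a b hab => by exact_mod_cast hmono hab) A hA
    have h2 : Lval l s k ≤
        ∑ j ∈ Finset.univ.filter (fun j : Fin (n + 1) => (j : ℕ) < p), (s j : ℤ) := by
      unfold Lval
      apply Finset.sum_le_sum_of_subset_of_nonneg
      · intro j hj
        simp only [mem_filter, mem_univ, true_and] at hj ⊢
        omega
      · intro j _ _; positivity
    have hzL : Lval l s k ≤ ∑ i ∈ A, (s i : ℤ) := le_trans h2 h1
    have hdk : (0 : ℤ) ≤ (d k : ℤ) := by positivity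
    have hmul : Lval l s k * (d k : ℤ) ≤ (∑ i ∈ A, (s i : ℤ)) * (d k : ℤ) :=
      mul_le_mul_of_nonneg_right hzL hdk
    have hmul2 : Lval l s k * (d k : ℤ) = (d k : ℤ) * Lval l s k := mul_comm _ _
    have hmk := (hm k).2
    have hlow : m k < (∑ i ∈ A, (s i : ℤ)) * (d k : ℤ) := by omega
    have hnotP := hfree k
    rw [Pset, Set.mem_setOf_eq] at hnotP
    push_neg at hnotP
    exact hnotP hlow
  have := Finset.sum_le_sum_of_subset (f := l) hsub
  have hge := aux_sum_IdSlt_ge hr l hl hsum p hp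
  omega

end Main

theorem stmt12 (r n : ℕ) (hr : 1 ≤ r) (l d : Fin r → ℕ)
    (hl : ∀ k, 1 ≤ l k) (hd : ∀ k, 1 ≤ d k) (hsum : ∑ k, l k = n)
    (s : Fin (n + 1) → ℕ) (hs : ∀ i, 0 < s i) (hmono : Monotone s)
    (hdet : ∀ k : Fin r, (d k : ℤ) * Rval l s k - (l k : ℤ) < (d k : ℤ) * Lval l s k)
    (m : Fin r → ℤ)
    (hm : ∀ k : Fin r,
      (d k : ℤ) * Rval l s k - (l k : ℤ) ≤ m k ∧ m k ≤ (d k : ℤ) * Lval l s k - 1) :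
    Nset l d s m = {0, 1} := by
  ext ν
  simp only [Set.mem_insert_iff, Set.mem_singleton_iff]
  constructor
  · rintro ⟨p, hp, z, ⟨hzS, hfree⟩, rfl⟩
    have h1 := q_le_p l d hd s hmono m hm p z hzS
    have h2 := p_le_q hr l d hl hd hsum s hmono m hm p z hp hzS hfree
    omega
  · -- membership of 0 and 1
    have capmin : ∀ (T : Finset ℕ), (∀ x ∈ T, x ≤ n + 1) →
        (T.filter (fun p => ∃ k, m k < zmin s p * d k ∧ zmin s p * d k ≤ m k + l k)).card
          ≤ n := by
      intro T hT
      calc (T.filter (fun p => ∃ k, m k < zmin s p * d k ∧ zmin s p * d k ≤ m k + l k)).card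
          ≤ (Finset.univ.biUnion (fun k : Fin r =>
              T.filter (fun p => m k < zmin s p * d k ∧ zmin s p * d k ≤ m k + l k))).card := by
            apply Finset.card_le_card
            intro p hp
            simp only [mem_filter] at hp
            obtain ⟨hpT, k, hk⟩ := hp
            exact Finset.mem_biUnion.mpr ⟨k, mem_univ _, Finset.mem_filter.mpr ⟨hpT, hk⟩⟩
        _ ≤ ∑ k : Fin r, (T.filter
              (fun p => m k < zmin s p * d k ∧ zmin s p * d k ≤ m k + l k)).card :=
            Finset.card_biUnion_le
        _ ≤ ∑ k : Fin r, l k := by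
            apply Finset.sum_le_sum
            intro k _
            exact aux_cap l d m hd k T (zmin s)
              (fun p hp q hq hpq => zmin_strict s hs hpq (hT q hq))
        _ = n := hsum
    have capmax : ∀ (T : Finset ℕ), (∀ x ∈ T, x ≤ n + 1) →
        (T.filter (fun p => ∃ k, m k < zmax s p * d k ∧ zmax s p * d k ≤ m k + l k)).card
          ≤ n := by
      intro T hT
      calc (T.filter (fun p => ∃ k, m k < zmax s p * d k ∧ zmax s p * d k ≤ m k + l k)).card
          ≤ (Finset.univ.biUnion (fun k : Fin r =>
              T.filter (fun p => m k < zmax s p * d k ∧ zmax s p * d k ≤ m k + l k))).card := by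
            apply Finset.card_le_card
            intro p hp
            simp only [mem_filter] at hp
            obtain ⟨hpT, k, hk⟩ := hp
            exact Finset.mem_biUnion.mpr ⟨k, mem_univ _, Finset.mem_filter.mpr ⟨hpT, hk⟩⟩
        _ ≤ ∑ k : Fin r, (T.filter
              (fun p => m k < zmax s p * d k ∧ zmax s p * d k ≤ m k + l k)).card :=
            Finset.card_biUnion_le
        _ ≤ ∑ k : Fin r, l k := by
            apply Finset.sum_le_sum
            intro k _
            exact aux_cap l d m hd k T (zmax s)
              (fun p hp q hq hpq => zmax_strict s hs hpq (hT q hq))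
        _ = n := hsum
    rintro (rfl | rfl)
    · -- 0 ∈ Nset via least free zmin point
      have hEx : ∃ p, p ≤ n + 1 ∧
          ∀ k, ¬ (m k < zmin s p * d k ∧ zmin s p * d k ≤ m k + l k) := by
        by_contra hcon
        push_neg at hcon
        have hsubset : Finset.range (n + 2) ⊆
            (Finset.range (n + 2)).filter
              (fun p => ∃ k, m k < zmin s p * d k ∧ zmin s p * d k ≤ m k + l k) := by
          intro p hp
          rw [Finset.mem_filter]
          refine ⟨hp, ?_⟩
          obtain ⟨k, hk1, hk2⟩ := hcon p (by simp at hp; omega)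
          exact ⟨k, hk1, hk2⟩
        have h1 := Finset.card_le_card hsubset
        have h2 := capmin (Finset.range (n + 2)) (fun x hx => by simp at hx; omega)
        simp at h1
        omega
      have hspec := Nat.find_spec hEx
      have hminim : ∀ j, j < Nat.find hEx → j ≤ n + 1 →
          ∃ k, m k < zmin s j * d k ∧ zmin s j * d k ≤ m k + l k := by
        intro j hj hjle
        have := Nat.find_min hEx hj
        push_neg at this
        obtain ⟨k, hk1, hk2⟩ := this hjle
        exact ⟨k, hk1, by omega⟩
      set p0 := Nat.find hEx with hp0def
      obtain ⟨hp0le, hp0free⟩ := hspec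
      set C := Finset.univ.filter
        (fun k : Fin r => m k + (l k : ℤ) < zmin s p0 * (d k : ℤ)) with hC
      have hqle : qval l d m (zmin s p0) ≤ p0 :=
        q_le_p l d hd s hmono m hm p0 _ (zmin_mem s p0 hp0le)
      have hqge : p0 ≤ qval l d m (zmin s p0) := by
        have hcover : Finset.range p0 ⊆ C.biUnion (fun k =>
            (Finset.range p0).filter
              (fun j => m k < zmin s j * d k ∧ zmin s j * d k ≤ m k + l k)) := by
          intro j hj
          rw [Finset.mem_range] at hj
          have hblocked : ∃ k, m k < zmin s j * d k ∧ zmin s j * d k ≤ m k + l k :=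
            hminim j hj (by omega)
          obtain ⟨k, hk1, hk2⟩ := hblocked
          have hkC : k ∈ C := by
            rw [hC, Finset.mem_filter]
            refine ⟨mem_univ _, ?_⟩
            have hlt : zmin s j < zmin s p0 := zmin_strict s hs hj hp0le
            have hdpos : (0 : ℤ) < (d k : ℤ) := by exact_mod_cast hd k
            have hlt2 : zmin s j * d k < zmin s p0 * d k :=
              mul_lt_mul_of_pos_right hlt hdpos
            have hfreek := hp0free k
            have hmlt : m k < zmin s p0 * d k := lt_trans hk1 hlt2
            omega
          exact Finset.mem_biUnion.mpr ⟨k, hkC,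
            Finset.mem_filter.mpr ⟨Finset.mem_range.mpr hj, hk1, hk2⟩⟩
        have h1 := Finset.card_le_card hcover
        have h2 := Finset.card_biUnion_le (s := C) (t := fun k =>
            (Finset.range p0).filter
              (fun j => m k < zmin s j * d k ∧ zmin s j * d k ≤ m k + l k))
        have h3 : ∀ k ∈ C, ((Finset.range p0).filter
            (fun j => m k < zmin s j * d k ∧ zmin s j * d k ≤ m k + l k)).card ≤ l k := by
          intro k _
          exact aux_cap l d m hd k _ (zmin s)
            (fun a ha b hb hab => zmin_strict s hs hab
              (by rw [Finset.mem_range] at hb; omega))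
        have h4 : (C.biUnion (fun k =>
            (Finset.range p0).filter
              (fun j => m k < zmin s j * d k ∧ zmin s j * d k ≤ m k + l k))).card
            ≤ ∑ k ∈ C, l k := le_trans h2 (Finset.sum_le_sum h3)
        have h5 : qval l d m (zmin s p0) = ∑ k ∈ C, l k := rfl
        simp only [Finset.card_range] at h1
        omega
      refine ⟨p0, hp0le, zmin s p0, ⟨zmin_mem s p0 hp0le, ?_⟩, ?_⟩
      · intro k
        rw [Pset, Set.mem_setOf_eq]
        exact hp0free k
      · have h : qval l d m (zmin s p0) = p0 := le_antisymm hqle hqge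
        omega
    · -- 1 ∈ Nset via greatest free zmax point
      have hFne : ((Finset.range (n + 2)).filter
          (fun p => ∀ k, ¬ (m k < zmax s p * d k ∧ zmax s p * d k ≤ m k + l k))).Nonempty := by
        by_contra hcon
        rw [Finset.not_nonempty_iff_eq_empty] at hcon
        have hsubset : Finset.range (n + 2) ⊆
            (Finset.range (n + 2)).filter
              (fun p => ∃ k, m k < zmax s p * d k ∧ zmax s p * d k ≤ m k + l k) := by
          intro p hp
          rw [Finset.mem_filter]
          refine ⟨hp, ?_⟩
          by_contra hc
          push_neg at hc
          have : p ∈ ((Finset.range (n + 2)).filter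
              (fun p => ∀ k, ¬ (m k < zmax s p * d k ∧ zmax s p * d k ≤ m k + l k))) := by
            rw [Finset.mem_filter]
            exact ⟨hp, fun k hk => by have := hc k hk.1; omega⟩
          rw [hcon] at this
          simp at this
        have h1 := Finset.card_le_card hsubset
        have h2 := capmax (Finset.range (n + 2)) (fun x hx => by simp at hx; omega)
        simp at h1
        omega
      set F := (Finset.range (n + 2)).filter
        (fun p => ∀ k, ¬ (m k < zmax s p * d k ∧ zmax s p * d k ≤ m k + l k)) with hF
      set p1 := F.max' hFne with hp1def
      have hp1F : p1 ∈ F := F.max'_mem hFne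
      have hp1le : p1 ≤ n + 1 := by
        rw [hF, Finset.mem_filter, Finset.mem_range] at hp1F
        omega
      have hp1free : ∀ k, ¬ (m k < zmax s p1 * d k ∧ zmax s p1 * d k ≤ m k + l k) := by
        rw [hF, Finset.mem_filter] at hp1F
        exact hp1F.2
      set C := Finset.univ.filter
        (fun k : Fin r => m k + (l k : ℤ) < zmax s p1 * (d k : ℤ)) with hC
      have hfreeP : ∀ k, zmax s p1 ∉ Pset (m k) (d k) (l k) := by
        intro k
        rw [Pset, Set.mem_setOf_eq]
        exact hp1free k
      have hqge : p1 ≤ qval l d m (zmax s p1) + 1 :=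
        p_le_q hr l d hl hd hsum s hmono m hm p1 _ hp1le (zmax_mem s p1 hp1le) hfreeP
      have hqle : qval l d m (zmax s p1) + 1 ≤ p1 := by
        have hcover : Finset.Icc (p1 + 1) (n + 1) ⊆
            (Finset.univ.filter (fun k : Fin r =>
              ¬ (m k + (l k : ℤ) < zmax s p1 * (d k : ℤ)))).biUnion (fun k =>
            (Finset.Icc (p1 + 1) (n + 1)).filter
              (fun j => m k < zmax s j * d k ∧ zmax s j * d k ≤ m k + l k)) := by
          intro j hj
          rw [Finset.mem_Icc] at hj
          have hblocked : ∃ k, m k < zmax s j * d k ∧ zmax s j * d k ≤ m k + l k := by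
            by_contra hc
            push_neg at hc
            have hjF : j ∈ F := by
              rw [hF, Finset.mem_filter, Finset.mem_range]
              exact ⟨by omega, fun k hk => by have := hc k hk.1; omega⟩
            have := F.le_max' j hjF
            omega
          obtain ⟨k, hk1, hk2⟩ := hblocked
          have hkC : k ∈ Finset.univ.filter (fun k : Fin r =>
              ¬ (m k + (l k : ℤ) < zmax s p1 * (d k : ℤ))) := by
            rw [Finset.mem_filter]
            refine ⟨mem_univ _, ?_⟩
            have hlt : zmax s p1 < zmax s j := zmax_strict s hs (by omega) (by omega)
            have hdpos : (0 : ℤ) < (d k : ℤ) := by exact_mod_cast hd k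
            have hlt2 : zmax s p1 * d k < zmax s j * d k :=
              mul_lt_mul_of_pos_right hlt hdpos
            omega
          exact Finset.mem_biUnion.mpr ⟨k, hkC,
            Finset.mem_filter.mpr ⟨Finset.mem_Icc.mpr ⟨hj.1, hj.2⟩, hk1, hk2⟩⟩
        have h1 := Finset.card_le_card hcover
        have h2 := Finset.card_biUnion_le
          (s := Finset.univ.filter (fun k : Fin r =>
              ¬ (m k + (l k : ℤ) < zmax s p1 * (d k : ℤ))))
          (t := fun k => (Finset.Icc (p1 + 1) (n + 1)).filter
              (fun j => m k < zmax s j * d k ∧ zmax s j * d k ≤ m k + l k))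
        have h3 : ∀ k ∈ Finset.univ.filter (fun k : Fin r =>
            ¬ (m k + (l k : ℤ) < zmax s p1 * (d k : ℤ))),
            ((Finset.Icc (p1 + 1) (n + 1)).filter
              (fun j => m k < zmax s j * d k ∧ zmax s j * d k ≤ m k + l k)).card ≤ l k := by
          intro k _
          exact aux_cap l d m hd k _ (zmax s)
            (fun a ha b hb hab => zmax_strict s hs hab
              (by rw [Finset.mem_Icc] at hb; omega))
        have h4 := le_trans h2 (Finset.sum_le_sum h3)
        have h5 : qval l d m (zmax s p1) +
            ∑ k ∈ Finset.univ.filter (fun k : Fin r =>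
              ¬ (m k + (l k : ℤ) < zmax s p1 * (d k : ℤ))), l k = n := by
          have := Finset.sum_filter_add_sum_filter_not (Finset.univ : Finset (Fin r))
            (fun k : Fin r => m k + (l k : ℤ) < zmax s p1 * (d k : ℤ)) l
          rw [hsum] at this
          exact this
        have hcard : (Finset.Icc (p1 + 1) (n + 1)).card = n + 1 - p1 := by
          rw [Nat.card_Icc]
          omega
        rw [hcard] at h1
        omega
      refine ⟨p1, hp1le, zmax s p1, ⟨zmax_mem s p1 hp1le, hfreeP⟩, ?_⟩
      have h : qval l d m (zmax s p1) + 1 = p1 := by omega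
      omega
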